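/- arXiv:2503.12003 — 3 statements merged into one kernel-verified Lean document; each statement's English description precedes it below -/
import Mathlib

section
/- The function LSE_ε⁺ : ℝ^q → ℝ defined by LSE_ε⁺(x) = (1/ε)·log(1 + Σ_{i=1}^q exp(ε·x_i)) is strictly convex for every ε > 0. -/
open Real Finset

lemma amgm_strict {s t a b : ℝ} (hs : 0 < s) (ht : 0 < t) (ha : 0 < a) (hb : 0 < b)
    (hab : a + b = 1) (hst : s ≠ t) : s ^ a * t ^ b < a * s + b * t := by
  have h := strictConcaveOn_log_Ioi.2 (Set.mem_Ioi.2 hs) (Set.mem_Ioi.2 ht) hst ha hb hab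
  simp only [smul_eq_mul] at h
  have h2 : s ^ a * t ^ b = Real.exp (a * Real.log s + b * Real.log t) := by
    rw [Real.rpow_def_of_pos hs, Real.rpow_def_of_pos ht, ← Real.exp_add]
    ring_nf
  rw [h2]
  calc Real.exp (a * Real.log s + b * Real.log t) < Real.exp (Real.log (a * s + b * t)) :=
        Real.exp_lt_exp.2 h
    _ = a * s + b * t := Real.exp_log (by positivity)

lemma amgm_le {s t a b : ℝ} (hs : 0 ≤ s) (ht : 0 ≤ t) (ha : 0 ≤ a) (hb : 0 ≤ b)
    (hab : a + b = 1) : s ^ a * t ^ b ≤ a * s + b * t :=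
  Real.geom_mean_le_arith_mean2_weighted ha hb hs ht hab

theorem stmt_1 (q : ℕ) (ε : ℝ) (hε : 0 < ε) :
    StrictConvexOn ℝ Set.univ
      (fun x : Fin q → ℝ => (1 / ε) * Real.log (1 + ∑ i, Real.exp (ε * x i))) := by
  refine ⟨convex_univ, ?_⟩
  intro x _ y _ hxy a b ha hb hab
  obtain ⟨i₀, hi₀⟩ : ∃ i, x i ≠ y i := Function.ne_iff.1 hxy
  set A : ℝ := 1 + ∑ i, Real.exp (ε * x i) with hA
  set B : ℝ := 1 + ∑ i, Real.exp (ε * y i) with hB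
  have hApos : 0 < A := by positivity
  have hBpos : 0 < B := by positivity
  simp only [smul_eq_mul, Pi.add_apply, Pi.smul_apply]
  -- key: 1 + ∑ exp(ε(a x i + b y i)) < A^a * B^b
  have hterm : ∀ i, Real.exp (ε * (a * x i + b * y i))
      = Real.exp (ε * x i) ^ a * Real.exp (ε * y i) ^ b := by
    intro i
    rw [← Real.exp_mul, ← Real.exp_mul, ← Real.exp_add]
    ring_nf
  have key : 1 + ∑ i, Real.exp (ε * (a * x i + b * y i)) < A ^ a * B ^ b := by
    by_cases hAB : A = B
    · have hABpow : A ^ a * B ^ b = A := by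
        rw [← hAB, ← Real.rpow_add hApos, hab, Real.rpow_one]
      rw [hABpow]
      have hsum : ∑ i, Real.exp (ε * (a * x i + b * y i))
          < ∑ i, (a * Real.exp (ε * x i) + b * Real.exp (ε * y i)) := by
        apply Finset.sum_lt_sum
        · intro i _
          rw [hterm i]
          exact amgm_le (Real.exp_pos _).le (Real.exp_pos _).le ha.le hb.le hab
        · refine ⟨i₀, Finset.mem_univ _, ?_⟩
          rw [hterm i₀]
          exact amgm_strict (Real.exp_pos _) (Real.exp_pos _) ha hb hab
            (fun h => hi₀ (by
              have := Real.exp_injective h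
              field_simp at this
              linarith))
      calc 1 + ∑ i, Real.exp (ε * (a * x i + b * y i))
          < 1 + ∑ i, (a * Real.exp (ε * x i) + b * Real.exp (ε * y i)) := by linarith
        _ = a * A + b * B := by
            rw [Finset.sum_add_distrib, ← Finset.mul_sum, ← Finset.mul_sum, hA, hB]; ring_nf
            nlinarith [hab]
        _ = A := by rw [← hAB]; nlinarith [hab]
    · -- A ≠ B
      have hCpos : 0 < A ^ a * B ^ b := by positivity
      have h1 : (1 : ℝ) < (a / A + b / B) * (A ^ a * B ^ b) := by
        have := amgm_strict (s := 1 / A) (t := 1 / B) (by positivity) (by positivity) ha hb hab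
          (by simp only [one_div]; exact fun h => hAB (by
            field_simp at h; linarith))
        have heq : (1 / A) ^ a * (1 / B) ^ b = 1 / (A ^ a * B ^ b) := by
          rw [Real.div_rpow zero_le_one hApos.le, Real.div_rpow zero_le_one hBpos.le,
            Real.one_rpow, Real.one_rpow]
          field_simp
        rw [heq, div_lt_iff₀ hCpos] at this
        have heq2 : (a * (1 / A) + b * (1 / B)) * (A ^ a * B ^ b)
            = (a / A + b / B) * (A ^ a * B ^ b) := by ring
        rwa [heq2] at this
      have h2 : ∀ i, Real.exp (ε * (a * x i + b * y i))
          ≤ (a * Real.exp (ε * x i) / A + b * Real.exp (ε * y i) / B) * (A ^ a * B ^ b) := by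
        intro i
        rw [hterm i]
        have := amgm_le (s := Real.exp (ε * x i) / A) (t := Real.exp (ε * y i) / B)
          (by positivity) (by positivity) ha.le hb.le hab
        have heq : (Real.exp (ε * x i) / A) ^ a * (Real.exp (ε * y i) / B) ^ b
            = Real.exp (ε * x i) ^ a * Real.exp (ε * y i) ^ b / (A ^ a * B ^ b) := by
          rw [Real.div_rpow (Real.exp_pos _).le hApos.le,
            Real.div_rpow (Real.exp_pos _).le hBpos.le]
          field_simp
        rw [heq, div_le_iff₀ hCpos] at this
        calc Real.exp (ε * x i) ^ a * Real.exp (ε * y i) ^ b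
            ≤ (a * (Real.exp (ε * x i) / A) + b * (Real.exp (ε * y i) / B)) * (A ^ a * B ^ b) :=
              this
          _ = _ := by ring
      calc 1 + ∑ i, Real.exp (ε * (a * x i + b * y i))
          < (a / A + b / B) * (A ^ a * B ^ b)
            + ∑ i, (a * Real.exp (ε * x i) / A + b * Real.exp (ε * y i) / B)
              * (A ^ a * B ^ b) := by
            have := Finset.sum_le_sum (fun i (_ : i ∈ Finset.univ) => h2 i)
            linarith
        _ = (a * A / A + b * B / B) * (A ^ a * B ^ b) := by
            rw [← Finset.sum_mul, ← add_mul]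
            congr 1
            rw [Finset.sum_add_distrib]
            simp only [← add_div, ← Finset.sum_div, ← Finset.mul_sum]
            rw [hA, hB]
            field_simp
            ring
        _ = A ^ a * B ^ b := by
            rw [mul_div_assoc, mul_div_assoc, div_self hApos.ne', div_self hBpos.ne']
            rw [mul_one, mul_one, hab, one_mul]
  -- conclude with log
  have hlog : Real.log (1 + ∑ i, Real.exp (ε * (a * x i + b * y i)))
      < a * Real.log A + b * Real.log B := by
    calc Real.log (1 + ∑ i, Real.exp (ε * (a * x i + b * y i)))
        < Real.log (A ^ a * B ^ b) := Real.log_lt_log (by positivity) key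
      _ = a * Real.log A + b * Real.log B := by
          rw [Real.log_mul (by positivity) (by positivity), Real.log_rpow hApos,
            Real.log_rpow hBpos]
  have h1ε : 0 < 1 / ε := by positivity
  calc (1 / ε) * Real.log (1 + ∑ i, Real.exp (ε * (a * x i + b * y i)))
      < (1 / ε) * (a * Real.log A + b * Real.log B) := by
        exact mul_lt_mul_of_pos_left hlog h1ε
    _ = a * ((1 / ε) * Real.log A) + b * ((1 / ε) * Real.log B) := by ring
end

section
/- The Hessian of LSE_ε⁺ at any point x ∈ ℝ^q is positive definite. -/
open Real Finset

namespace StmtAux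

variable {q : ℕ}

noncomputable def gfun (ε : ℝ) (w : Fin q → ℝ) : ℝ := 1 + ∑ k, Real.exp (ε * w k)

lemma gpos (ε : ℝ) (w : Fin q → ℝ) : 0 < gfun ε w := by
  have : (0:ℝ) ≤ ∑ k, Real.exp (ε * w k) :=
    Finset.sum_nonneg fun k _ => (Real.exp_pos _).le
  unfold gfun; linarith

noncomputable def gderiv (ε : ℝ) (w : Fin q → ℝ) : (Fin q → ℝ) →L[ℝ] ℝ :=
  ∑ k, (ε * Real.exp (ε * w k)) • ContinuousLinearMap.proj k

lemma hasG (ε : ℝ) (w : Fin q → ℝ) : HasFDerivAt (gfun ε) (gderiv ε w) w := by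
  have h : HasFDerivAt (fun v : Fin q → ℝ => ∑ k, Real.exp (ε * v k)) (gderiv ε w) w := by
    apply HasFDerivAt.fun_sum
    intro k _
    have h1 : HasFDerivAt (fun v : Fin q → ℝ => ε * v k)
        (ε • (ContinuousLinearMap.proj k : (Fin q → ℝ) →L[ℝ] ℝ)) w :=
      ((ContinuousLinearMap.proj k : (Fin q → ℝ) →L[ℝ] ℝ).hasFDerivAt).const_mul ε
    have h2 := h1.exp
    rw [smul_smul, mul_comm (Real.exp (ε * w k)) ε] at h2
    exact h2
  exact h.const_add 1

lemma gderiv_apply (ε : ℝ) (w : Fin q → ℝ) (v : Fin q → ℝ) :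
    gderiv ε w v = ∑ k, ε * Real.exp (ε * w k) * v k := by
  simp [gderiv, ContinuousLinearMap.sum_apply]

lemma gderiv_single (ε : ℝ) (w : Fin q → ℝ) (j : Fin q) :
    gderiv ε w (Pi.single j 1) = ε * Real.exp (ε * w j) := by
  rw [gderiv_apply]
  rw [Finset.sum_eq_single j]
  · simp
  · intro k _ hk; simp [Pi.single_apply, hk]
  · simp

lemma hasF (ε : ℝ) (hε : 0 < ε) (y : Fin q → ℝ) :
    HasFDerivAt (fun w : Fin q → ℝ => (1 / ε) * Real.log (1 + ∑ k, Real.exp (ε * w k)))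
      ((1 / ε) • ((gfun ε y)⁻¹ • gderiv ε y)) y := by
  have h := ((hasG ε y).log (ne_of_gt (gpos ε y))).const_mul (1 / ε)
  exact h

lemma inner_fderiv (ε : ℝ) (hε : 0 < ε) (y : Fin q → ℝ) (j : Fin q) :
    fderiv ℝ (fun w : Fin q → ℝ => (1 / ε) * Real.log (1 + ∑ k, Real.exp (ε * w k)))
      y (Pi.single j 1) = Real.exp (ε * y j) * (gfun ε y)⁻¹ := by
  rw [(hasF ε hε y).fderiv]
  simp only [ContinuousLinearMap.smul_apply, gderiv_single, smul_eq_mul]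
  field_simp

lemma hasH (ε : ℝ) (x : Fin q → ℝ) (j : Fin q) :
    HasFDerivAt (fun y : Fin q → ℝ => Real.exp (ε * y j) * (gfun ε y)⁻¹)
      ((Real.exp (ε * x j)) • (-((gfun ε x) ^ 2)⁻¹ • gderiv ε x) +
        ((gfun ε x)⁻¹) • ((ε * Real.exp (ε * x j)) •
          (ContinuousLinearMap.proj j : (Fin q → ℝ) →L[ℝ] ℝ))) x := by
  have hc : HasFDerivAt (fun y : Fin q → ℝ => Real.exp (ε * y j))
      ((ε * Real.exp (ε * x j)) • (ContinuousLinearMap.proj j : (Fin q → ℝ) →L[ℝ] ℝ)) x := by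
    have h1 : HasFDerivAt (fun v : Fin q → ℝ => ε * v j)
        (ε • (ContinuousLinearMap.proj j : (Fin q → ℝ) →L[ℝ] ℝ)) x :=
      ((ContinuousLinearMap.proj j : (Fin q → ℝ) →L[ℝ] ℝ).hasFDerivAt).const_mul ε
    have h2 := h1.exp
    rw [smul_smul, mul_comm (Real.exp (ε * x j)) ε] at h2
    exact h2
  have hd : HasFDerivAt (fun y : Fin q → ℝ => (gfun ε y)⁻¹)
      (-((gfun ε x) ^ 2)⁻¹ • gderiv ε x) x := by
    have := (hasDerivAt_inv (ne_of_gt (gpos ε x))).comp_hasFDerivAt x (hasG ε x)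
    exact this
  exact hc.mul hd

lemma hessian_entry (ε : ℝ) (hε : 0 < ε) (x : Fin q → ℝ) (i j : Fin q) :
    fderiv ℝ (fun y : Fin q → ℝ =>
      fderiv ℝ (fun w : Fin q → ℝ => (1 / ε) * Real.log (1 + ∑ k, Real.exp (ε * w k)))
        y (Pi.single j 1)) x (Pi.single i 1) =
    ε * (Real.exp (ε * x i) * Real.exp (ε * x j) * (-((gfun ε x) ^ 2)⁻¹) +
      (if j = i then Real.exp (ε * x j) * (gfun ε x)⁻¹ else 0)) := by
  have hfun : (fun y : Fin q → ℝ =>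
      fderiv ℝ (fun w : Fin q → ℝ => (1 / ε) * Real.log (1 + ∑ k, Real.exp (ε * w k)))
        y (Pi.single j 1)) = fun y => Real.exp (ε * y j) * (gfun ε y)⁻¹ := by
    funext y; exact inner_fderiv ε hε y j
  rw [hfun, (hasH ε x j).fderiv]
  simp only [ContinuousLinearMap.add_apply, ContinuousLinearMap.smul_apply, gderiv_single,
    smul_eq_mul, ContinuousLinearMap.proj_apply]
  have : (Pi.single i 1 : Fin q → ℝ) j = if j = i then 1 else 0 := by
    simp [Pi.single_apply]
  rw [this]
  by_cases h : j = i <;> simp [h] <;> ring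

end StmtAux

/-- The Hessian of `LSE_ε⁺` (as the matrix of second partial derivatives) is
positive definite at every point. -/
theorem stmt_2 (q : ℕ) (ε : ℝ) (hε : 0 < ε) (x : Fin q → ℝ) :
    (Matrix.of (fun i j : Fin q =>
      fderiv ℝ (fun y : Fin q → ℝ =>
        fderiv ℝ (fun w : Fin q → ℝ => (1 / ε) * Real.log (1 + ∑ k, Real.exp (ε * w k)))
          y (Pi.single j 1)) x (Pi.single i 1))).PosDef := by
  set z : Fin q → ℝ := fun i => Real.exp (ε * x i) with hz
  set T : ℝ := StmtAux.gfun ε x with hT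
  have hTpos : 0 < T := StmtAux.gpos ε x
  have hM : (Matrix.of (fun i j : Fin q =>
      fderiv ℝ (fun y : Fin q → ℝ =>
        fderiv ℝ (fun w : Fin q → ℝ => (1 / ε) * Real.log (1 + ∑ k, Real.exp (ε * w k)))
          y (Pi.single j 1)) x (Pi.single i 1))) =
      Matrix.of (fun i j : Fin q =>
        ε * (z i * z j * (-(T ^ 2)⁻¹) + if j = i then z j * T⁻¹ else 0)) := by
    ext i j
    exact StmtAux.hessian_entry ε hε x i j
  rw [hM, Matrix.posDef_iff_dotProduct_mulVec]
  constructor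
  · ext i j
    simp only [Matrix.conjTranspose_apply, Matrix.of_apply, star_trivial]
    by_cases h : i = j
    · subst h; ring
    · rw [if_neg h, if_neg (Ne.symm h)]; ring
  · intro v hv
    set B : ℝ := ∑ i, z i * v i with hB
    set A : ℝ := ∑ i, z i * v i * v i with hA
    set S : ℝ := ∑ i, z i with hS
    have key2 : ∀ i, ∑ j, (ε * (z i * z j * (-(T ^ 2)⁻¹) + if j = i then z j * T⁻¹ else 0)) * v j
        = ε * (-(T ^ 2)⁻¹) * z i * B + ε * T⁻¹ * (z i * v i) := by
      intro i
      have h1 : ∑ j, (ε * ((if j = i then z j * T⁻¹ else 0) * v j)) = ε * (z i * T⁻¹ * v i) := by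
        rw [← Finset.mul_sum]
        congr 1
        rw [Finset.sum_eq_single i]
        · simp
        · intro k _ hk; simp [hk]
        · simp
      have h2 : ∑ j, ε * (z i * z j * (-(T ^ 2)⁻¹)) * v j = ε * (-(T ^ 2)⁻¹) * z i * B := by
        rw [hB, Finset.mul_sum]
        exact Finset.sum_congr rfl fun j _ => by ring
      calc ∑ j, (ε * (z i * z j * (-(T ^ 2)⁻¹) + if j = i then z j * T⁻¹ else 0)) * v j
          = ∑ j, (ε * (z i * z j * (-(T ^ 2)⁻¹)) * v j
              + ε * ((if j = i then z j * T⁻¹ else 0) * v j)) :=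
            Finset.sum_congr rfl fun j _ => by ring
        _ = ε * (-(T ^ 2)⁻¹) * z i * B + ε * (z i * T⁻¹ * v i) := by
            rw [Finset.sum_add_distrib, h2, h1]
        _ = ε * (-(T ^ 2)⁻¹) * z i * B + ε * T⁻¹ * (z i * v i) := by ring
    have hdot : dotProduct (star v) ((Matrix.of (fun i j : Fin q =>
        ε * (z i * z j * (-(T ^ 2)⁻¹) + if j = i then z j * T⁻¹ else 0))).mulVec v)
        = ε * (-(T ^ 2)⁻¹) * B * B + ε * T⁻¹ * A := by
      simp only [star_trivial, dotProduct, Matrix.mulVec, Matrix.of_apply]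
      calc ∑ i, v i * ∑ j, (ε * (z i * z j * (-(T ^ 2)⁻¹) + if j = i then z j * T⁻¹ else 0)) * v j
          = ∑ i, (ε * (-(T ^ 2)⁻¹) * B * (z i * v i) + ε * T⁻¹ * (z i * v i * v i)) := by
            refine Finset.sum_congr rfl fun i _ => ?_
            rw [key2 i]; ring
        _ = ε * (-(T ^ 2)⁻¹) * B * B + ε * T⁻¹ * A := by
            rw [Finset.sum_add_distrib, ← Finset.mul_sum, ← Finset.mul_sum, ← hB, ← hA]
    rw [hdot]
    -- Positivity
    obtain ⟨i0, hi0⟩ := Function.ne_iff.mp hv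
    have hApos : 0 < A := by
      refine Finset.sum_pos' (fun i _ => ?_) ⟨i0, Finset.mem_univ _, ?_⟩
      · have : z i * v i * v i = z i * (v i)^2 := by ring
        rw [this]; positivity
      · have : z i0 * v i0 * v i0 = z i0 * (v i0)^2 := by ring
        rw [this]
        have : (0:ℝ) < (v i0)^2 :=
          lt_of_le_of_ne (sq_nonneg _) (fun h => hi0 (by simpa [eq_comm, pow_eq_zero_iff] using h))
        exact mul_pos (Real.exp_pos _) this
    have hCS : B ^ 2 ≤ S * A := by
      have := Finset.sum_mul_sq_le_sq_mul_sq Finset.univ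
        (fun i => Real.sqrt (z i)) (fun i => Real.sqrt (z i) * v i)
      have e1 : ∀ i : Fin q, Real.sqrt (z i) * (Real.sqrt (z i) * v i) = z i * v i := by
        intro i
        rw [← mul_assoc, Real.mul_self_sqrt (Real.exp_pos _).le]
      have e2 : ∀ i : Fin q, Real.sqrt (z i) ^ 2 = z i := fun i =>
        Real.sq_sqrt (Real.exp_pos _).le
      have e3 : ∀ i : Fin q, (Real.sqrt (z i) * v i) ^ 2 = z i * v i * v i := by
        intro i
        rw [mul_pow, e2]; ring
      calc B ^ 2 = (∑ i, Real.sqrt (z i) * (Real.sqrt (z i) * v i)) ^ 2 := by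
            rw [hB]; congr 1; exact Finset.sum_congr rfl fun i _ => (e1 i).symm
        _ ≤ (∑ i, Real.sqrt (z i) ^ 2) * ∑ i, (Real.sqrt (z i) * v i) ^ 2 := this
        _ = S * A := by
            rw [hS, hA]
            congr 1
            · exact Finset.sum_congr rfl fun i _ => e2 i
            · exact Finset.sum_congr rfl fun i _ => e3 i
    have hST : S < T := by
      rw [hT, hS]; unfold StmtAux.gfun; rw [hz]; linarith
    have hBT : B ^ 2 < T * A := lt_of_le_of_lt hCS (by nlinarith)
    have hrw : ε * (-(T ^ 2)⁻¹) * B * B + ε * T⁻¹ * A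
        = ε * ((T ^ 2)⁻¹ * (T * A - B ^ 2)) := by
      field_simp
      ring
    rw [hrw]
    have hT2 : (0:ℝ) < (T ^ 2)⁻¹ := by positivity
    exact mul_pos hε (mul_pos hT2 (by linarith))
end

section
/- Let g₁, ..., g_m : ℝ^n → ℝ be convex and twice continuously differentiable, and suppose the Jacobian of g = (g₁,...,g_m) at z has full column rank. Then the Hessian of z ↦ LSE_ε⁺(g₁(z), ..., g_m(z)) at z is positive definite, for any ε > 0. -/
set_option maxHeartbeats 1000000
open Filter

lemma mono_deriv_nonneg {φ : ℝ → ℝ} (hm : Monotone φ) (x : ℝ) : 0 ≤ deriv φ x := by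
  by_cases h : DifferentiableAt ℝ φ x
  · have h2 := hasDerivAt_iff_tendsto_slope.1 h.hasDerivAt
    refine ge_of_tendsto h2 ?_
    filter_upwards [self_mem_nhdsWithin] with y hy
    rcases lt_or_gt_of_ne (Ne.symm hy) with hlt | hgt
    · rw [slope_def_field]
      exact div_nonneg (by simp [sub_nonneg, hm hlt.le]) (by linarith)
    · rw [slope_def_field]
      exact div_nonneg_of_nonpos (by simp [sub_nonpos, hm hgt.le]) (by linarith)
  · simp [deriv_zero_of_not_differentiableAt h]

theorem stmt_14 (n m : ℕ) (ε : ℝ) (hε : 0 < ε)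
    (g : Fin m → (Fin n → ℝ) → ℝ)
    (hgconv : ∀ i, ConvexOn ℝ Set.univ (g i))
    (hg : ∀ i, ContDiff ℝ 2 (g i))
    (z : Fin n → ℝ)
    (hrank : ∀ v : Fin n → ℝ,
      (fderiv ℝ (fun u : Fin n → ℝ => fun i => g i u) z) v = 0 → v = 0) :
    (Matrix.of (fun i j : Fin n =>
      fderiv ℝ (fun w =>
        fderiv ℝ (fun u : Fin n → ℝ =>
          (1 / ε) * Real.log (1 + ∑ k, Real.exp (ε * g k u))) w (Pi.single j 1)) z
        (Pi.single i 1))).PosDef := by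
  set f : (Fin n → ℝ) → ℝ :=
    fun u => (1 / ε) * Real.log (1 + ∑ k, Real.exp (ε * g k u)) with hfdef
  have hSpos : ∀ u : Fin n → ℝ, (0:ℝ) < 1 + ∑ k, Real.exp (ε * g k u) := by
    intro u
    have : (0:ℝ) ≤ ∑ k, Real.exp (ε * g k u) :=
      Finset.sum_nonneg fun k _ => (Real.exp_pos _).le
    linarith
  have hf : ContDiff ℝ 2 f := by
    have h1 : ContDiff ℝ 2 (fun u : Fin n → ℝ => 1 + ∑ k, Real.exp (ε * g k u)) :=
      contDiff_const.add (ContDiff.sum fun k _ => (contDiff_const.mul (hg k)).exp)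
    exact contDiff_const.mul (h1.log fun u => (hSpos u).ne')
  have hΦdiff : DifferentiableAt ℝ (fderiv ℝ f) z := by
    have := (hf.fderiv_right (m := 1) (by norm_num)).differentiable (by norm_num)
    exact this.differentiableAt
  set B := fderiv ℝ (fderiv ℝ f) z with hB
  have happ : ∀ u v : Fin n → ℝ,
      fderiv ℝ (fun w => fderiv ℝ f w u) z v = B v u := by
    intro u v
    have h := ((ContinuousLinearMap.apply ℝ ℝ u).hasFDerivAt.comp z
      hΦdiff.hasFDerivAt).fderiv
    have : fderiv ℝ (fun w => fderiv ℝ f w u) z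
        = (ContinuousLinearMap.apply ℝ ℝ u).comp B := h
    rw [this]; rfl
  have hsymm : IsSymmSndFDerivAt ℝ f z :=
    hf.contDiffAt.isSymmSndFDerivAt (by norm_num)
  have key : ∀ v : Fin n → ℝ, v ≠ 0 → 0 < B v v := by
    intro v hv
    -- the curve
    set c : ℝ → Fin n → ℝ := fun t => z + t • v with hcdef
    have hc0 : c 0 = z := by simp [hcdef]
    have hcderiv : ∀ t : ℝ, HasDerivAt c v t := by
      intro t
      have h1 : HasDerivAt (fun t : ℝ => t • v) v t := by
        simpa using (hasDerivAt_id t).smul_const v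
      exact h1.const_add z
    have hccd : ContDiff ℝ 2 c := contDiff_const.add (contDiff_id.smul contDiff_const)
    set ψ : Fin m → ℝ → ℝ := fun k t => g k (c t) with hψdef
    have hψ : ∀ k, ContDiff ℝ 2 (ψ k) := fun k => (hg k).comp hccd
    have hψd : ∀ k, Differentiable ℝ (ψ k) := fun k => (hψ k).differentiable (by norm_num)
    have hψd' : ∀ k, Differentiable ℝ (deriv (ψ k)) := by
      intro k
      have h2 : ContDiff ℝ (1 + 1 : ℕ) (ψ k) := by
        exact_mod_cast hψ k
      exact (((contDiff_succ_iff_deriv (n := 1)).mp (by exact_mod_cast h2)).2.2).differentiable (by norm_num)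
    have hψconv : ∀ k, ConvexOn ℝ Set.univ (ψ k) := by
      intro k
      have := (hgconv k).comp_affineMap (AffineMap.lineMap z (z + v))
      have heq : (g k ∘ ⇑(AffineMap.lineMap z (z + v))) = ψ k := by
        funext t
        simp [AffineMap.lineMap_apply, hψdef, hcdef, add_comm]
      rw [heq] at this
      simpa using this
    set a : Fin m → ℝ := fun k => deriv (ψ k) 0 with hadef
    set b : Fin m → ℝ := fun k => deriv (deriv (ψ k)) 0 with hbdef
    have hbnn : ∀ k, 0 ≤ b k := by
      intro k
      have hmono : Monotone (deriv (ψ k)) :=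
        monotoneOn_univ.mp ((hψconv k).monotoneOn_deriv (fun x _ => (hψd k x)))
      exact mono_deriv_nonneg hmono 0
    -- a k is the directional derivative of g k
    have haval : ∀ k, a k = fderiv ℝ (g k) z v := by
      intro k
      have hfd : HasFDerivAt (g k) (fderiv ℝ (g k) z) (c 0) := by
        rw [hc0]; exact ((hg k).differentiable (by norm_num) z).hasFDerivAt
      exact (hfd.comp_hasDerivAt 0 (hcderiv 0)).deriv
    have ha : ∃ k, a k ≠ 0 := by
      by_contra hcon
      push_neg at hcon
      apply hv
      apply hrank
      rw [fderiv_pi (fun i => ((hg i).differentiable (by norm_num)).differentiableAt)]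
      funext i
      simpa [ContinuousLinearMap.pi_apply] using (haval i ▸ hcon i : fderiv ℝ (g i) z v = 0)
    -- one-dimensional functions
    set S : ℝ → ℝ := fun t => 1 + ∑ k, Real.exp (ε * ψ k t) with hSdef
    have hS : ∀ t, 0 < S t := fun t => hSpos (c t)
    set N : ℝ → ℝ := fun t => ∑ k, Real.exp (ε * ψ k t) * (ε * deriv (ψ k) t) with hNdef
    set D1 : ℝ → ℝ := fun t => (1 / ε) * (N t / S t) with hD1def
    have hSder : ∀ t, HasDerivAt S (N t) t := by
      intro t
      have h1 : ∀ k : Fin m, HasDerivAt (fun s => Real.exp (ε * ψ k s))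
          (Real.exp (ε * ψ k t) * (ε * deriv (ψ k) t)) t :=
        fun k => (((hψd k t).hasDerivAt).const_mul ε).exp
      simpa [hNdef, hSdef] using (HasDerivAt.fun_sum (u := Finset.univ) (fun k _ => h1 k)).const_add 1
    have hd1 : ∀ t, HasDerivAt (fun s => f (c s)) (D1 t) t := by
      intro t
      have h2 : HasDerivAt (fun s => Real.log (S s)) (N t / S t) t :=
        (hSder t).log (hS t).ne'
      have h3 := h2.const_mul (1 / ε)
      convert h3 using 2
    have hder_eq : (fun t => fderiv ℝ f (c t) v) = D1 := by
      funext t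
      have hA : HasDerivAt (fun s => f (c s)) (fderiv ℝ f (c t) v) t :=
        ((hf.differentiable (by norm_num) (c t)).hasFDerivAt).comp_hasDerivAt t (hcderiv t)
      exact hA.unique (hd1 t)
    have hBvv : HasDerivAt (fun t => fderiv ℝ f (c t) v) (B v v) 0 := by
      have hΦ : HasFDerivAt (fderiv ℝ f) B (c 0) := by rw [hc0]; exact hΦdiff.hasFDerivAt
      have h1 : HasDerivAt (fun t => fderiv ℝ f (c t)) (B v) 0 :=
        hΦ.comp_hasDerivAt 0 (hcderiv 0)
      have h2 := h1.clm_apply (hasDerivAt_const 0 v)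
      simpa using h2
    -- compute the second derivative explicitly
    set q : Fin m → ℝ := fun k => Real.exp (ε * ψ k 0) with hqdef
    have hq : ∀ k, 0 < q k := fun k => Real.exp_pos _
    set N' : ℝ := ∑ k, ((q k * (ε * a k)) * (ε * a k) + q k * (ε * b k)) with hN'def
    have hNder : HasDerivAt N N' 0 := by
      have h1 : ∀ k : Fin m, HasDerivAt (fun s => Real.exp (ε * ψ k s) * (ε * deriv (ψ k) s))
          ((q k * (ε * a k)) * (ε * a k) + q k * (ε * b k)) 0 := by
        intro k
        have hE : HasDerivAt (fun s => Real.exp (ε * ψ k s)) (q k * (ε * a k)) 0 :=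
          (((hψd k 0).hasDerivAt).const_mul ε).exp
        have hD : HasDerivAt (fun s => ε * deriv (ψ k) s) (ε * b k) 0 :=
          ((hψd' k 0).hasDerivAt).const_mul ε
        exact hE.mul hD
      exact HasDerivAt.fun_sum (fun k _ => h1 k)
    have hN0 : N 0 = ∑ k, q k * (ε * a k) := rfl
    have hD1der : HasDerivAt D1 ((1 / ε) * ((N' * S 0 - N 0 * N 0) / (S 0) ^ 2)) 0 := by
      have := (hNder.div (hSder 0) (hS 0).ne').const_mul (1 / ε)
      simpa [hD1def] using this
    have hval : B v v = (1 / ε) * ((N' * S 0 - N 0 * N 0) / (S 0) ^ 2) := by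
      have := hder_eq ▸ hBvv
      exact this.unique hD1der
    rw [hval]
    -- positivity
    have hA2pos : 0 < ∑ k, q k * a k ^ 2 := by
      obtain ⟨k0, hk0⟩ := ha
      refine Finset.sum_pos' (fun k _ => by positivity) ⟨k0, Finset.mem_univ k0, ?_⟩
      have : 0 < a k0 ^ 2 := by positivity
      exact mul_pos (hq k0) this
    have hCS : (∑ k, q k * a k) ^ 2 ≤ (∑ k, q k) * ∑ k, q k * a k ^ 2 := by
      have h := Finset.sum_mul_sq_le_sq_mul_sq Finset.univ
        (fun k => Real.sqrt (q k)) (fun k => Real.sqrt (q k) * a k)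
      have e1 : ∑ k, Real.sqrt (q k) * (Real.sqrt (q k) * a k) = ∑ k, q k * a k :=
        Finset.sum_congr rfl fun k _ => by
          rw [← mul_assoc, Real.mul_self_sqrt (hq k).le]
      have e2 : ∑ k, Real.sqrt (q k) ^ 2 = ∑ k, q k :=
        Finset.sum_congr rfl fun k _ => Real.sq_sqrt (hq k).le
      have e3 : ∑ k, (Real.sqrt (q k) * a k) ^ 2 = ∑ k, q k * a k ^ 2 :=
        Finset.sum_congr rfl fun k _ => by
          rw [mul_pow, Real.sq_sqrt (hq k).le]
      rwa [e1, e2, e3] at h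
    have hBbnn : 0 ≤ ∑ k, q k * b k :=
      Finset.sum_nonneg fun k _ => mul_nonneg (hq k).le (hbnn k)
    have hQnn : 0 ≤ ∑ k, q k := Finset.sum_nonneg fun k _ => (hq k).le
    have hN'eq : N' = ε ^ 2 * (∑ k, q k * a k ^ 2) + ε * ∑ k, q k * b k := by
      rw [hN'def, Finset.sum_add_distrib, Finset.mul_sum, Finset.mul_sum]
      congr 1 <;> exact Finset.sum_congr rfl fun k _ => by ring
    have hN0eq : N 0 = ε * ∑ k, q k * a k := by
      rw [hN0, Finset.mul_sum]
      exact Finset.sum_congr rfl fun k _ => by ring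
    have hS0eq : S 0 = 1 + ∑ k, q k := rfl
    have hpos : 0 < N' * S 0 - N 0 * N 0 := by
      rw [hN'eq, hN0eq, hS0eq]
      have h1 : ε ^ 2 * (∑ k, q k * a k) ^ 2 ≤ ε ^ 2 * ((∑ k, q k) * ∑ k, q k * a k ^ 2) :=
        mul_le_mul_of_nonneg_left hCS (by positivity)
      have h2 : 0 ≤ ε * (∑ k, q k * b k) * (1 + ∑ k, q k) :=
        mul_nonneg (mul_nonneg hε.le hBbnn) (by linarith)
      nlinarith [h1, h2, mul_pos (pow_pos hε 2) hA2pos]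
    have hs2 : 0 < (S 0) ^ 2 := pow_pos (hS 0) 2
    have : 0 < (N' * S 0 - N 0 * N 0) / (S 0) ^ 2 := div_pos hpos hs2
    have h1ε : 0 < 1/ε := by positivity
    exact mul_pos h1ε this
  rw [Matrix.posDef_iff_dotProduct_mulVec]
  constructor
  · ext i j
    simp only [Matrix.conjTranspose_apply, Matrix.of_apply, star_trivial]
    rw [happ, happ]
    exact hsymm _ _
  · intro x hx
    have hxsum : (∑ i, x i • (Pi.single i (1:ℝ) : Fin n → ℝ)) = x := by
      have h0 : (∑ i, x i • (Pi.single i (1:ℝ) : Fin n → ℝ)) = ∑ i, Pi.single i (x i) :=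
        Finset.sum_congr rfl fun i _ => by rw [← Pi.single_smul, smul_eq_mul, mul_one]
      rw [h0, Finset.univ_sum_single]
    have hlin : ∀ (L : (Fin n → ℝ) →L[ℝ] ℝ), L x = ∑ j, x j * L (Pi.single j 1) := by
      intro L
      conv_lhs => rw [← hxsum]
      rw [map_sum]
      exact Finset.sum_congr rfl fun j _ => by rw [map_smul]; rfl
    have hlin2 : ∀ u, B x u = ∑ i, x i * B (Pi.single i 1) u := by
      intro u
      conv_lhs => rw [← hxsum]
      rw [map_sum, ContinuousLinearMap.sum_apply]
      exact Finset.sum_congr rfl fun i _ => by rw [map_smul]; rfl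
    have hquad : dotProduct (star x)
        ((Matrix.of (fun i j : Fin n =>
          fderiv ℝ (fun w => fderiv ℝ f w (Pi.single j 1)) z (Pi.single i 1))).mulVec x)
        = B x x := by
      rw [show (star x) = x from rfl]
      simp only [dotProduct, Matrix.mulVec, Matrix.of_apply, happ]
      rw [hlin2 x]
      refine Finset.sum_congr rfl fun i _ => ?_
      rw [hlin (B (Pi.single i 1))]
      congr 1
      exact Finset.sum_congr rfl fun j _ => mul_comm _ _
    rw [hquad]
    exact key x hx
end
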